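/- The dual of a latroid is a latroid: if (ρ, ‖·‖, L) is an A-latroid on a finite modular lattice L, then the functions ‖L⊥‖⊥ = ‖1‖ − ‖L‖ and ρ⊥(L⊥) = ‖L⊥‖⊥ − ρ(1) + ρ(L) on the order-dual lattice L⊥ satisfy the latroid axioms, and the double dual equals the original latroid. -/

import Mathlib

/-- The axioms of an `A`-latroid `(ρ, ‖·‖, L)` on a finite modular lattice. -/
def IsLatroid {A L : Type*} [AddCommGroup A] [PartialOrder A] [IsOrderedAddMonoid A] [Lattice L] [BoundedOrder L]
    (ρ nrm : L → A) : Prop :=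
  ρ ⊥ = 0 ∧ nrm ⊥ = 0 ∧
  (∀ a b : L, a < b → nrm a < nrm b) ∧
  (∀ a b : L, nrm a + nrm b = nrm (a ⊔ b) + nrm (a ⊓ b)) ∧
  (∀ a b : L, a < b → 0 ≤ ρ b - ρ a ∧ ρ b - ρ a ≤ nrm b - nrm a) ∧
  (∀ a b : L, ρ (a ⊔ b) + ρ (a ⊓ b) ≤ ρ a + ρ b)

/-- The dual length function on the order-dual lattice. -/
def dualNrm {A L : Type*} [AddCommGroup A] [PartialOrder A] [IsOrderedAddMonoid A] [Lattice L] [BoundedOrder L]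
    (nrm : L → A) : Lᵒᵈ → A :=
  fun x => nrm ⊤ - nrm (OrderDual.ofDual x)

/-- The dual rank function on the order-dual lattice. -/
def dualRho {A L : Type*} [AddCommGroup A] [PartialOrder A] [IsOrderedAddMonoid A] [Lattice L] [BoundedOrder L]
    (ρ nrm : L → A) : Lᵒᵈ → A :=
  fun x => dualNrm nrm x - ρ ⊤ + ρ (OrderDual.ofDual x)

/-- The dual of a latroid is a latroid, and the double dual is the original latroid. -/
theorem latroid_dual
    {A L : Type*} [AddCommGroup A] [PartialOrder A] [IsOrderedAddMonoid A]
    [Lattice L] [BoundedOrder L] [Fintype L] [IsModularLattice L]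
    (ρ nrm : L → A) (h : IsLatroid ρ nrm) :
    IsLatroid (dualRho ρ nrm) (dualNrm nrm) ∧
    (∀ x : L,
      dualRho (dualRho ρ nrm) (dualNrm nrm) (OrderDual.toDual (OrderDual.toDual x))
        = ρ x ∧
      dualNrm (dualNrm nrm) (OrderDual.toDual (OrderDual.toDual x)) = nrm x) := by
  obtain ⟨h1, h2, h3, h4, h5, h6⟩ := h
  constructor
  · refine ⟨?_, ?_, ?_, ?_, ?_, ?_⟩
    · simp [dualRho, dualNrm]
    · simp [dualNrm]
    · intro a b hab
      have hlt : OrderDual.ofDual b < OrderDual.ofDual a := hab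
      exact sub_lt_sub_left (h3 _ _ hlt) _
    · intro a b
      have key := h4 (OrderDual.ofDual a) (OrderDual.ofDual b)
      show (nrm ⊤ - nrm (OrderDual.ofDual a)) + (nrm ⊤ - nrm (OrderDual.ofDual b)) =
        (nrm ⊤ - nrm (OrderDual.ofDual a ⊓ OrderDual.ofDual b)) +
        (nrm ⊤ - nrm (OrderDual.ofDual a ⊔ OrderDual.ofDual b))
      rw [sub_add_sub_comm, sub_add_sub_comm, key]; abel
    · intro a b hab
      have hlt : OrderDual.ofDual b < OrderDual.ofDual a := hab
      obtain ⟨r1, r2⟩ := h5 _ _ hlt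
      have e1 : dualRho ρ nrm b - dualRho ρ nrm a =
          (nrm (OrderDual.ofDual a) - nrm (OrderDual.ofDual b)) -
          (ρ (OrderDual.ofDual a) - ρ (OrderDual.ofDual b)) := by
        unfold dualRho dualNrm; abel
      have e2 : dualNrm nrm b - dualNrm nrm a =
          nrm (OrderDual.ofDual a) - nrm (OrderDual.ofDual b) := by
        unfold dualNrm; abel
      rw [e1, e2]
      exact ⟨sub_nonneg.mpr r2, sub_le_self _ r1⟩
    · intro a b
      have key := h6 (OrderDual.ofDual a) (OrderDual.ofDual b)
      have keyn := h4 (OrderDual.ofDual a) (OrderDual.ofDual b)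
      have e1 : dualRho ρ nrm (a ⊔ b) + dualRho ρ nrm (a ⊓ b) =
          (nrm ⊤ + nrm ⊤ - (nrm (OrderDual.ofDual a ⊔ OrderDual.ofDual b) +
            nrm (OrderDual.ofDual a ⊓ OrderDual.ofDual b)) - (ρ ⊤ + ρ ⊤)) +
          (ρ (OrderDual.ofDual a ⊔ OrderDual.ofDual b) +
            ρ (OrderDual.ofDual a ⊓ OrderDual.ofDual b)) := by
        unfold dualRho dualNrm
        simp only [ofDual_sup, ofDual_inf]
        abel
      have e2 : dualRho ρ nrm a + dualRho ρ nrm b =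
          (nrm ⊤ + nrm ⊤ - (nrm (OrderDual.ofDual a) + nrm (OrderDual.ofDual b))
            - (ρ ⊤ + ρ ⊤)) +
          (ρ (OrderDual.ofDual a) + ρ (OrderDual.ofDual b)) := by
        unfold dualRho dualNrm; abel
      rw [e1, e2, ← keyn]
      exact add_le_add_right key _
  · intro x
    constructor
    · show dualNrm (dualNrm nrm) (OrderDual.toDual (OrderDual.toDual x))
        - dualRho ρ nrm (⊤ : Lᵒᵈ) + dualRho ρ nrm (OrderDual.toDual x) = ρ x
      have e0 : dualNrm (dualNrm nrm) (OrderDual.toDual (OrderDual.toDual x)) = nrm x := by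
        show dualNrm nrm (⊤ : Lᵒᵈ) - dualNrm nrm (OrderDual.toDual x) = nrm x
        show (nrm ⊤ - nrm ⊥) - (nrm ⊤ - nrm x) = nrm x
        rw [h2]; abel
      rw [e0]
      show nrm x - ((nrm ⊤ - nrm ⊥) - ρ ⊤ + ρ ⊥) + ((nrm ⊤ - nrm x) - ρ ⊤ + ρ x) = ρ x
      rw [h1, h2]; abel
    · show dualNrm nrm (⊤ : Lᵒᵈ) - dualNrm nrm (OrderDual.toDual x) = nrm x
      show (nrm ⊤ - nrm ⊥) - (nrm ⊤ - nrm x) = nrm x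
      rw [h2]; abel
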